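/- Let R be a finite-dimensional associative real algebra with identity, equipped with an involution γ (an ℝ-linear anti-automorphism with γ∘γ = id). Let C ∈ R[t] and let M ∈ ℝ[t] be a monic real polynomial of positive degree. If the left remainder S := lrem(C, M) has vanishing norm, i.e. ν(S) = S·γ(S) = 0 (so that M is a real pseudofactor of C), then M divides the norm polynomial ν(C) = C·γ(C) in R[t]. -/

import Mathlib

open Polynomial

/-- Coefficientwise application of the involution `star` to a left polynomial. -/
noncomputable def pconj {R : Type*} [Ring R] [StarRing R] (p : Polynomial R) : Polynomial R :=
  ⟨AddMonoidAlgebra.ofCoeff (Finsupp.mapRange star (star_zero R) p.toFinsupp.coeff)⟩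

lemma pconj_coeff {R : Type*} [Ring R] [StarRing R] (p : Polynomial R) (n : ℕ) :
    (pconj p).coeff n = star (p.coeff n) := rfl

lemma pconj_add {R : Type*} [Ring R] [StarRing R] (p q : Polynomial R) :
    pconj (p + q) = pconj p + pconj q := by
  ext n; simp [pconj_coeff, star_add]

lemma pconj_mul {R : Type*} [Ring R] [StarRing R] (p q : Polynomial R) :
    pconj (p * q) = pconj q * pconj p := by
  ext n
  rw [pconj_coeff, coeff_mul, coeff_mul, star_sum, ← Finset.Nat.sum_antidiagonal_swap]
  refine Finset.sum_congr rfl fun x _ => ?_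
  simp [pconj_coeff, star_mul]

lemma pconj_map_real {R : Type*} [Ring R] [Algebra ℝ R] [StarRing R] [StarModule ℝ R]
    (M : Polynomial ℝ) : pconj (M.map (algebraMap ℝ R)) = M.map (algebraMap ℝ R) := by
  ext n
  rw [pconj_coeff, coeff_map, Algebra.algebraMap_eq_smul_one, star_smul, star_one, star_trivial]

lemma real_comm {R : Type*} [Ring R] [Algebra ℝ R] (M : Polynomial ℝ) (p : Polynomial R) :
    p * M.map (algebraMap ℝ R) = M.map (algebraMap ℝ R) * p := by
  ext n
  rw [coeff_mul, coeff_mul, ← Finset.Nat.sum_antidiagonal_swap]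
  refine Finset.sum_congr rfl fun x _ => ?_
  simp only [Prod.fst_swap, Prod.snd_swap, coeff_map]
  first
  | exact Algebra.commutes _ _
  | exact (Algebra.commutes _ _).symm

/-- A monic real pseudofactor of `F` (the left remainder `S = lrem(F, M)` has vanishing
norm `S · γ(S) = 0`) is a factor of the norm polynomial `ν(F) = F · γ(F)`. -/
theorem real_pseudofactor_dvd_norm {R : Type*} [Ring R] [Algebra ℝ R]
    [FiniteDimensional ℝ R] [StarRing R] [StarModule ℝ R]
    (F Q S : Polynomial R) (M : Polynomial ℝ) (hM : M.Monic) (hMdeg : 0 < M.degree)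
    (hrem : F = Q * M.map (algebraMap ℝ R) + S) (hSdeg : S.degree < M.degree)
    (hnu : S * pconj S = 0) :
    M.map (algebraMap ℝ R) ∣ F * pconj F := by
  set M' := M.map (algebraMap ℝ R) with hM'
  have h1 : ∀ p : Polynomial R, p * M' = M' * p := fun p => real_comm M p
  have hc2 : ∀ p q : Polynomial R, p * (M' * q) = M' * (p * q) := fun p q => by
    rw [← mul_assoc, h1 p, mul_assoc]
  have hc := pconj_map_real (R := R) M
  refine ⟨Q * (M' * pconj Q) + (Q * pconj S + S * pconj Q), ?_⟩
  rw [hrem, pconj_add, pconj_mul, hc, ← hM']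
  calc (Q * M' + S) * (M' * pconj Q + pconj S)
      = Q * (M' * (M' * pconj Q)) + (Q * (M' * pconj S) + (S * (M' * pconj Q) + S * pconj S)) := by
        noncomm_ring
    _ = M' * (Q * (M' * pconj Q) + (Q * pconj S + S * pconj Q)) := by
        rw [hnu, add_zero]
        simp only [hc2]
        noncomm_ring
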